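/- Let δ : ℝⁿ → ℝ be measurable with 0 < δ⁻ ≤ δ(x) ≤ δ⁺ < 1 and such that the exponent n/δ(·) belongs to P^log(ℝⁿ). Let b : ℝⁿ → ℝ be locally integrable and suppose there is a constant C₀ > 0 with |b(x) − b(z)| ≤ C₀ |x − z|^{δ(x)} for all x, z ∈ ℝⁿ. Then for every positive integer k there is a constant C > 0, depending only on C₀, k, n and the constants of n/δ(·), such that for every cube Q ⊂ ℝⁿ and every z ∈ kQ: |b(z) − b_Q| ≤ C ‖χ_Q‖_{n/δ(·)}. -/

import Mathlib

open MeasureTheory ENNReal NNReal Set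

noncomputable section

abbrev Rn (n : ℕ) := EuclideanSpace ℝ (Fin n)

namespace VarExp

variable {n : ℕ}

/-- Closed axis-parallel cube with center `c` and sidelength `l`. -/
def cubeSet (c : Rn n) (l : ℝ) : Set (Rn n) := {x | ∀ i, |x i - c i| ≤ l / 2}

/-- Characteristic function of a set. -/
def chi (s : Set (Rn n)) : Rn n → ℝ := s.indicator fun _ => 1

/-- Average of `b` over the cube with center `c` and sidelength `l`. -/
def cavg (c : Rn n) (l : ℝ) (b : Rn n → ℝ) : ℝ := ⨍ x in cubeSet c l, b x

/-- Global log-Hölder continuity with explicit constants. -/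
def LogHolderWith (p : Rn n → ℝ) (C pinf : ℝ) : Prop :=
  (∀ x y : Rn n, |p x - p y| ≤ C / Real.log (Real.exp 1 + 1 / ‖x - y‖)) ∧
  (∀ x : Rn n, |p x - pinf| ≤ C / Real.log (Real.exp 1 + ‖x‖))

/-- Global log-Hölder continuity (the class `P^log`). -/
def LogHolder (p : Rn n → ℝ) : Prop := ∃ C pinf : ℝ, 0 < C ∧ LogHolderWith p C pinf

/-- The class `P^loglog`: bounded and loglog-Hölder continuous. -/
def LogLogHolder (q : Rn n → ℝ) : Prop :=
  (∃ M : ℝ, ∀ x, |q x| ≤ M) ∧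
  ∃ C : ℝ, 0 < C ∧ ∀ x y : Rn n,
    |q x - q y| ≤ C / Real.log (Real.exp 1 + Real.log (Real.exp 1 + 1 / ‖x - y‖))

/-- Pointwise conjugate exponent. -/
def conj (t : ℝ) : ℝ := t / (t - 1)

/-- Luxemburg norm (with values in `ℝ≥0∞`) of an `ℝ≥0∞`-valued function for a
variable exponent `p`. -/
def vnormE (p : Rn n → ℝ) (f : Rn n → ℝ≥0∞) : ℝ≥0∞ :=
  sInf {lam : ℝ≥0∞ | ∃ l : ℝ, 0 < l ∧ lam = ENNReal.ofReal l ∧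
    ∫⁻ x, (f x / ENNReal.ofReal l) ^ p x ≤ 1}

/-- Variable exponent Lebesgue (Luxemburg) norm. -/
def vnorm (p : Rn n → ℝ) (f : Rn n → ℝ) : ℝ≥0∞ :=
  vnormE p fun x => ENNReal.ofReal |f x|

/-- `φ_p(x,t)` for an extended exponent : `t^p` if `p < ∞`, and `∞·χ_{(1,∞)}(t)` if `p = ∞`. -/
def phiExp (pe : ℝ≥0∞) (t : ℝ≥0∞) : ℝ≥0∞ :=
  if pe = ⊤ then (if t ≤ 1 then 0 else ⊤) else t ^ pe.toReal

/-- Luxemburg norm for an extended (possibly infinite) variable exponent. -/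
def vnormX (p : Rn n → ℝ≥0∞) (f : Rn n → ℝ) : ℝ≥0∞ :=
  sInf {lam : ℝ≥0∞ | ∃ l : ℝ, 0 < l ∧ lam = ENNReal.ofReal l ∧
    ∫⁻ x, phiExp (p x) (ENNReal.ofReal (|f x| / l)) ≤ 1}

/-- The Musielak–Orlicz norm of the space `L^{p(·)}(log L)^{q(·)}`. -/
def llognorm (p q : Rn n → ℝ) (f : Rn n → ℝ) : ℝ≥0∞ :=
  sInf {lam : ℝ≥0∞ | ∃ l : ℝ, 0 < l ∧ lam = ENNReal.ofReal l ∧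
    ∫⁻ x, ENNReal.ofReal ((|f x| / l) ^ p x *
      Real.log (Real.exp 1 + |f x| / l) ^ q x) ≤ 1}

/-- Generalized Φ-function. -/
def IsGPhi (Ψ : Rn n → ℝ → ℝ≥0∞) : Prop :=
  (∀ t : ℝ, Measurable fun x => Ψ x t) ∧
  (∀ x, ConvexOn ℝ≥0 (Ici (0:ℝ)) (Ψ x)) ∧
  (∀ x, Ψ x 0 = 0) ∧
  (∀ x, Filter.Tendsto (Ψ x) (nhdsWithin 0 (Ioi 0)) (nhds 0)) ∧
  (∀ x, Filter.Tendsto (Ψ x) Filter.atTop (nhds ⊤))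

/-- Luxemburg norm associated to a generalized Φ-function. -/
def gnorm (Ψ : Rn n → ℝ → ℝ≥0∞) (f : Rn n → ℝ) : ℝ≥0∞ :=
  sInf {lam : ℝ≥0∞ | ∃ l : ℝ, 0 < l ∧ lam = ENNReal.ofReal l ∧
    ∫⁻ x, Ψ x (|f x| / l) ≤ 1}

/-- Generalized inverse of a generalized Φ-function. -/
def ginv (Ψ : Rn n → ℝ → ℝ≥0∞) (x : Rn n) (t : ℝ≥0∞) : ℝ :=
  sInf {u : ℝ | 0 ≤ u ∧ t ≤ Ψ x u}

/-- Conjugate (Legendre transform) of a generalized Φ-function. -/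
def gconj (Ψ : Rn n → ℝ → ℝ≥0∞) (x : Rn n) (u : ℝ) : ℝ≥0∞ :=
  ⨆ t : Ici (0:ℝ), ENNReal.ofReal (t.1 * u) - Ψ x t.1

/-- Condition 𝓕 on a triple of generalized Φ-functions. -/
def CondF (A B D : Rn n → ℝ → ℝ≥0∞) : Prop :=
  ∃ C : ℝ, 0 < C ∧
    (∀ (c : Rn n) (l : ℝ), 0 < l →
      gnorm A (chi (cubeSet c l)) * gnorm B (chi (cubeSet c l)) ≤
        ENNReal.ofReal C * gnorm D (chi (cubeSet c l))) ∧
    (∀ (x : Rn n) (t : ℝ≥0∞), ginv A x t * ginv B x t ≤ C * ginv D x t) ∧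
    (∀ (c : Rn n) (l : ℝ), 0 < l →
      gnorm D (chi (cubeSet c l)) * gnorm (gconj D) (chi (cubeSet c l)) ≤
        ENNReal.ofReal (C * l ^ n))

/-- Maximal operator associated to a generalized Φ-function. -/
def gmax (Ψ : Rn n → ℝ → ℝ≥0∞) (f : Rn n → ℝ) (x : Rn n) : ℝ≥0∞ :=
  ⨆ (c : Rn n) (l : ℝ) (_ : 0 < l) (_ : x ∈ cubeSet c l),
    gnorm Ψ ((cubeSet c l).indicator f) / gnorm Ψ (chi (cubeSet c l))

/-- Fractional maximal operator associated to a generalized Φ-function, where the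
fractional exponent `β` is allowed to take the value `∞`. -/
def gmaxFrac (β : Rn n → ℝ≥0∞) (Ψ : Rn n → ℝ → ℝ≥0∞) (f : Rn n → ℝ) (x : Rn n) : ℝ≥0∞ :=
  ⨆ (c : Rn n) (l : ℝ) (_ : 0 < l) (_ : x ∈ cubeSet c l),
    vnormX β (chi (cubeSet c l)) *
      gnorm Ψ ((cubeSet c l).indicator f) / gnorm Ψ (chi (cubeSet c l))

/-- `φ_{a,b}(t) = t^a (log(e+t))^b`. -/
def phiab (a b t : ℝ) : ℝ := t ^ a * Real.log (Real.exp 1 + t) ^ b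

/-- Generalized inverse of `φ_{a,b}`. -/
def phiInv (a b s : ℝ) : ℝ := sInf {u : ℝ | 0 ≤ u ∧ s ≤ phiab a b u}

/-- The annulus `{x : r < ‖x‖ ≤ R}`. -/
def annulus (r R : ℝ) : Set (Rn n) := {x | r < ‖x‖ ∧ ‖x‖ ≤ R}

/-- `K̄(t) = ess sup_{t<|x|≤2t} K(x)`. -/
def Kbar (K : Rn n → ℝ) (t : ℝ) : ℝ≥0∞ :=
  essSup (fun x => ENNReal.ofReal (K x)) (volume.restrict (annulus t (2 * t)))

/-- `K̃(t) = ∫_{|z|≤t} K(z) dz`. -/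
def Ktilde (K : Rn n → ℝ) (t : ℝ) : ℝ :=
  ∫ z in {z : Rn n | ‖z‖ ≤ t}, K z

/-- The class 𝔇 of kernels, with explicit parameters `c`, `δ`, `ε`. -/
def ClassDWith (K : Rn n → ℝ) (c δ ε : ℝ) : Prop :=
  LocallyIntegrable K ∧ (∀ x, 0 ≤ K x) ∧
  0 < c ∧ 0 < δ ∧ 0 ≤ ε ∧ ε < 1 ∧
  ∀ k : ℤ,
    essSup (fun x => ENNReal.ofReal (K x))
        (volume.restrict (annulus ((2:ℝ) ^ k) ((2:ℝ) ^ (k+1)))) ≤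
      ENNReal.ofReal ((c / (2:ℝ) ^ (k * (n:ℤ))) *
        ∫ y in annulus (δ * (1-ε) * (2:ℝ) ^ k) (2 * δ * (1+ε) * (2:ℝ) ^ k), K y)

/-- The class 𝔇 of kernels. -/
def ClassD (K : Rn n → ℝ) : Prop := ∃ c δ ε : ℝ, ClassDWith K c δ ε

/-- The half-open dyadic cube `2^{-k}([0,1)^n + m)`. -/
def dyadicSet (k : ℤ) (m : Fin n → ℤ) : Set (Rn n) :=
  {x | ∀ i, (m i : ℝ) * (2:ℝ) ^ (-k) ≤ x i ∧ x i < ((m i : ℝ) + 1) * (2:ℝ) ^ (-k)}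

/-- The center of the dyadic cube `2^{-k}([0,1)^n + m)`. -/
def dyadicCenter (k : ℤ) (m : Fin n → ℤ) : Rn n :=
  (WithLp.equiv 2 (Fin n → ℝ)).symm fun i => ((m i : ℝ) + 1 / 2) * (2:ℝ) ^ (-k)

end VarExp

namespace VarExp
variable {n : ℕ}

lemma cubeSet_eq (c : Rn n) (l : ℝ) :
    cubeSet c l = (MeasurableEquiv.toLp 2 (Fin n → ℝ)).symm ⁻¹'
      (Set.univ.pi fun i => Set.Icc (c i - l/2) (c i + l/2)) := by
  ext x
  simp only [cubeSet, mem_setOf_eq, mem_preimage, mem_pi, mem_univ, forall_true_left, mem_Icc,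
    MeasurableEquiv.coe_toLp_symm, MeasurableEquiv.coe_mk, Equiv.coe_fn_mk,
    abs_le]
  constructor <;> intro h i <;> have := h i <;>
    exact ⟨by linarith [this.1], by linarith [this.2]⟩

lemma measurableSet_cubeSet (c : Rn n) (l : ℝ) : MeasurableSet (cubeSet c l) := by
  rw [cubeSet_eq]
  exact (MeasurableEquiv.toLp 2 (Fin n → ℝ)).symm.measurable
    (MeasurableSet.univ_pi fun i => measurableSet_Icc)

lemma volume_cubeSet (c : Rn n) {l : ℝ} (hl : 0 ≤ l) :
    volume (cubeSet c l) = ENNReal.ofReal (l ^ n) := by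
  rw [cubeSet_eq,
    (EuclideanSpace.volume_preserving_symm_measurableEquiv_toLp (Fin n)).measure_preimage
      (MeasurableSet.univ_pi fun i => measurableSet_Icc).nullMeasurableSet,
    volume_pi_pi]
  have : ∀ i : Fin n, volume (Set.Icc (c i - l/2) (c i + l/2)) = ENNReal.ofReal l := by
    intro i; rw [Real.volume_Icc]; ring_nf
  simp only [this, Finset.prod_const, Finset.card_univ, Fintype.card_fin]
  rw [← ENNReal.ofReal_pow hl]

lemma norm_sub_le_of_coord {x y : Rn n} {M : ℝ} (hM : 0 ≤ M) (h : ∀ i, |x i - y i| ≤ M) :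
    ‖x - y‖ ≤ Real.sqrt n * M := by
  rw [EuclideanSpace.norm_eq]
  have h1 : ∀ i : Fin n, ‖(x - y) i‖ ^ 2 ≤ M ^ 2 := by
    intro i
    have : ‖(x - y) i‖ = |x i - y i| := by
      simp [PiLp.sub_apply, Real.norm_eq_abs]
    rw [this]
    exact pow_le_pow_left₀ (abs_nonneg _) (h i) 2
  calc Real.sqrt (∑ i, ‖(x - y) i‖ ^ 2) ≤ Real.sqrt (∑ _i : Fin n, M ^ 2) :=
        Real.sqrt_le_sqrt (Finset.sum_le_sum fun i _ => h1 i)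
    _ = Real.sqrt n * M := by
        rw [Finset.sum_const, Finset.card_univ, Fintype.card_fin, nsmul_eq_mul,
          Real.sqrt_mul (by positivity), Real.sqrt_sq hM]

lemma isCompact_cubeSet (c : Rn n) (l : ℝ) : IsCompact (cubeSet c l) := by
  apply Metric.isCompact_of_isClosed_isBounded
  · have : cubeSet c l = ⋂ i, (fun x : Rn n => |x i - c i|) ⁻¹' Set.Iic (l/2) := by
      ext x; simp [cubeSet]
    rw [this]
    exact isClosed_iInter fun i => isClosed_Iic.preimage
      (((EuclideanSpace.proj (𝕜 := ℝ) i).continuous.sub continuous_const).abs)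
  · apply Bornology.IsBounded.subset (Metric.isBounded_closedBall
      (x := c) (r := Real.sqrt n * |l/2|))
    intro x hx
    simp only [Metric.mem_closedBall, dist_eq_norm]
    exact norm_sub_le_of_coord (abs_nonneg _) fun i => (hx i).trans (le_abs_self _)


end VarExp

open VarExp in
/-- if `|b(x) - b(z)| ≤ C₀|x-z|^{δ(x)}` then `|b(z) - b_Q| ≲ ‖χ_Q‖_{n/δ(·)}`
for every `z ∈ kQ`. -/
theorem statement11 (n : ℕ) (δ : Rn n → ℝ) (d1 d2 : ℝ) (hd1 : 0 < d1) (hd2 : d2 < 1)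
    (hdbd : ∀ x, d1 ≤ δ x ∧ δ x ≤ d2)
    (hδlog : LogHolder fun x => (n : ℝ) / δ x)
    (b : Rn n → ℝ) (hb : LocallyIntegrable b) (C₀ : ℝ) (hC₀ : 0 < C₀)
    (hbl : ∀ x z : Rn n, |b x - b z| ≤ C₀ * ‖x - z‖ ^ δ x) :
    ∀ k : ℕ, 0 < k → ∃ C : ℝ, 0 < C ∧ ∀ (c : Rn n) (l : ℝ), 0 < l →
      ∀ z ∈ cubeSet c (k * l),
        |b z - cavg c l b| ≤
          C * (vnorm (fun x => (n : ℝ) / δ x) (chi (cubeSet c l))).toReal := by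
  intro k hk
  set p : Rn n → ℝ := fun x => (n : ℝ) / δ x with hp
  set A : ℝ := Real.sqrt n * (k + 1) / 2 with hA
  have hδpos : ∀ x, 0 < δ x := fun x => lt_of_lt_of_le hd1 (hdbd x).1
  have hApow : (0:ℝ) ≤ A ^ n := by positivity
  set K : ℝ := C₀ * (1 + A ^ n) with hK
  have hKpos : 0 < K := by positivity
  refine ⟨K, hKpos, ?_⟩
  intro c l hl z hz
  by_cases hn : n = 0
  · subst hn
    have hsub : ∀ x y : Rn 0, x = y := fun x y => WithLp.ofLp_injective 2 (funext fun i : Fin 0 => i.elim0)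
    have hQuniv : cubeSet c l = univ := eq_univ_of_forall fun x i => i.elim0
    have hvol : volume (univ : Set (Rn 0)) = 1 := by
      have h := volume_cubeSet c hl.le
      rw [hQuniv] at h; simpa using h
    have hcavg : cavg c l b = b z := by
      have hb' : b = fun _ => b z := funext fun x => by rw [hsub x z]
      rw [cavg, hQuniv, hb', setAverage_eq, setIntegral_const]
      simp [hvol, measureReal_def]
    rw [hcavg, sub_self, abs_zero]
    exact mul_nonneg hKpos.le ENNReal.toReal_nonneg
  -- main case n ≥ 1
  have hnpos : (0:ℝ) < n := by exact_mod_cast Nat.pos_of_ne_zero hn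
  have hn1 : (1:ℝ) ≤ n := by exact_mod_cast Nat.one_le_iff_ne_zero.mpr hn
  set Q := cubeSet c l with hQ
  have hQm : MeasurableSet Q := measurableSet_cubeSet c l
  have hln : (0:ℝ) < l ^ n := pow_pos hl n
  have hvolQ : volume Q = ENNReal.ofReal (l ^ n) := volume_cubeSet c hl.le
  have hvolQ_toReal : (volume Q).toReal = l ^ n := by rw [hvolQ, toReal_ofReal hln.le]
  have hvolQ_ne_top : volume Q ≠ ⊤ := by rw [hvolQ]; exact ofReal_ne_top
  have hApos : 0 < A := by
    have h1 : 0 < Real.sqrt n := Real.sqrt_pos.mpr hnpos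
    rw [hA]; positivity
  have hDpos : 0 < A * l := mul_pos hApos hl
  have hIntb : IntegrableOn b Q := hb.integrableOn_isCompact (isCompact_cubeSet c l)
  have hIntc : IntegrableOn (fun _ => b z) Q :=
    integrableOn_const hvolQ_ne_top
  have hpge1 : ∀ x, 1 ≤ p x := by
    intro x
    rw [hp, one_le_div (hδpos x)]
    exact le_trans (le_trans (hdbd x).2 hd2.le) hn1
  have hdist : ∀ x ∈ Q, ‖z - x‖ ≤ A * l := by
    intro x hx
    have hco : ∀ i, |z i - x i| ≤ (k + 1) * l / 2 := by
      intro i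
      have h1 := hz i
      have h2 := hx i
      have h3 : |z i - x i| ≤ |z i - c i| + |c i - x i| := abs_sub_le (z i) (c i) (x i)
      have h4 : |c i - x i| = |x i - c i| := abs_sub_comm _ _
      have hkl : (k:ℝ) * l / 2 ≥ |z i - c i| := h1
      rw [h4] at h3
      have hk1 : (1:ℝ) ≤ k := by exact_mod_cast hk
      calc |z i - x i| ≤ (k:ℝ) * l / 2 + l / 2 := by linarith
        _ = ((k:ℝ) + 1) * l / 2 := by ring
    calc ‖z - x‖ ≤ Real.sqrt n * ((k + 1) * l / 2) :=
          norm_sub_le_of_coord (by positivity) hco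
      _ = A * l := by rw [hA]; ring
  -- the defining set of the Luxemburg norm
  have hvnorm : vnorm p (chi Q) = sInf {lam : ℝ≥0∞ | ∃ l₁ : ℝ, 0 < l₁ ∧
      lam = ENNReal.ofReal l₁ ∧
      ∫⁻ x, (ENNReal.ofReal |chi Q x| / ENNReal.ofReal l₁) ^ p x ≤ 1} := rfl
  -- main estimate for admissible l₁
  have hmain : ∀ l₁ : ℝ, 0 < l₁ →
      (∫⁻ x, (ENNReal.ofReal |chi Q x| / ENNReal.ofReal l₁) ^ p x ≤ 1) →
      |b z - cavg c l b| ≤ K * l₁ := by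
    intro l₁ hl₁ hadm
    have key : ∀ x ∈ Q, |b z - b x| ≤ C₀ * l₁ + C₀ * l₁ * (A*l) ^ n * (1/l₁) ^ p x := by
      intro x hx
      have h1 : |b z - b x| ≤ C₀ * ‖x - z‖ ^ δ x := by
        rw [abs_sub_comm]; exact hbl x z
      have h2 : ‖x - z‖ ^ δ x ≤ (A * l) ^ δ x := by
        apply Real.rpow_le_rpow (norm_nonneg _) _ (hδpos x).le
        rw [norm_sub_rev]; exact hdist x hx
      have h3 : (A * l) ^ δ x ≤ l₁ + l₁ * ((A*l) ^ n * (1/l₁) ^ p x) := by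
        set u := (A * l) ^ δ x with hu
        have hupos : 0 < u := Real.rpow_pos_of_pos hDpos _
        have hterm : 0 ≤ (A*l) ^ n * (1/l₁) ^ p x := by positivity
        rcases le_or_gt u l₁ with hcase | hcase
        · nlinarith [mul_nonneg hl₁.le hterm]
        · have hb1 : 1 ≤ u / l₁ := (one_le_div hl₁).mpr hcase.le
          have h4 : u / l₁ ≤ (u / l₁) ^ p x := by
            calc u / l₁ = (u / l₁) ^ (1:ℝ) := (Real.rpow_one _).symm
              _ ≤ (u / l₁) ^ p x := Real.rpow_le_rpow_of_exponent_le hb1 (hpge1 x)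
          have h5 : (u / l₁) ^ p x = (A*l) ^ n * (1/l₁) ^ p x := by
            rw [Real.div_rpow hupos.le hl₁.le]
            have hup : u ^ p x = (A*l) ^ n := by
              rw [hu, ← Real.rpow_natCast (A*l) n, ← Real.rpow_mul hDpos.le]
              congr 1
              rw [hp]
              field_simp
              exact div_self (hδpos x).ne'
            have h1d : (1/l₁ : ℝ) ^ p x = 1 / l₁ ^ p x := by
              rw [Real.div_rpow zero_le_one hl₁.le, Real.one_rpow]
            rw [hup, h1d, mul_one_div]
          have h6 : u ≤ l₁ * ((u / l₁) ^ p x) := by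
            rw [mul_comm, ← div_le_iff₀ hl₁]
            exact h4
          rw [h5] at h6
          linarith
      calc |b z - b x| ≤ C₀ * ‖x - z‖ ^ δ x := h1
        _ ≤ C₀ * (A * l) ^ δ x := by
            exact mul_le_mul_of_nonneg_left h2 hC₀.le
        _ ≤ C₀ * (l₁ + l₁ * ((A*l) ^ n * (1/l₁) ^ p x)) := mul_le_mul_of_nonneg_left h3 hC₀.le
        _ = C₀ * l₁ + C₀ * l₁ * (A*l) ^ n * (1/l₁) ^ p x := by ring
    -- pass to lintegral
    have hchi : ∀ x ∈ Q, (ENNReal.ofReal |chi Q x| / ENNReal.ofReal l₁) ^ p x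
        = ENNReal.ofReal ((1/l₁) ^ p x) := by
      intro x hx
      have hx1 : chi Q x = 1 := by rw [chi, indicator_of_mem hx]
      rw [hx1, abs_one, ← ENNReal.ofReal_div_of_pos hl₁,
        ENNReal.ofReal_rpow_of_pos (by positivity)]
    have hlint : ∫⁻ x in Q, ENNReal.ofReal |b z - b x| ≤
        ENNReal.ofReal (C₀ * l₁ * l ^ n + C₀ * l₁ * (A*l) ^ n) := by
      have step1 : ∫⁻ x in Q, ENNReal.ofReal |b z - b x| ≤
          ∫⁻ x in Q, (ENNReal.ofReal (C₀ * l₁) + ENNReal.ofReal (C₀ * l₁ * (A*l) ^ n) *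
            (ENNReal.ofReal |chi Q x| / ENNReal.ofReal l₁) ^ p x) := by
        apply lintegral_mono_ae
        rw [ae_restrict_iff' hQm]
        filter_upwards with x hx
        rw [hchi x hx]
        calc ENNReal.ofReal |b z - b x|
            ≤ ENNReal.ofReal (C₀ * l₁ + C₀ * l₁ * (A*l) ^ n * (1/l₁) ^ p x) :=
              ofReal_le_ofReal (key x hx)
          _ = ENNReal.ofReal (C₀ * l₁) + ENNReal.ofReal (C₀ * l₁ * (A*l) ^ n) *
              ENNReal.ofReal ((1/l₁) ^ p x) := by
              rw [ENNReal.ofReal_add (by positivity) (by positivity),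
                ← ENNReal.ofReal_mul (by positivity)]
      have step2 : ∫⁻ x in Q, (ENNReal.ofReal (C₀ * l₁) + ENNReal.ofReal (C₀ * l₁ * (A*l) ^ n) *
            (ENNReal.ofReal |chi Q x| / ENNReal.ofReal l₁) ^ p x) =
          ENNReal.ofReal (C₀ * l₁) * volume Q + ENNReal.ofReal (C₀ * l₁ * (A*l) ^ n) *
            ∫⁻ x in Q, (ENNReal.ofReal |chi Q x| / ENNReal.ofReal l₁) ^ p x := by
        rw [lintegral_add_left measurable_const, setLIntegral_const,
          lintegral_const_mul' _ _ ofReal_ne_top]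
      have step3 : ∫⁻ x in Q, (ENNReal.ofReal |chi Q x| / ENNReal.ofReal l₁) ^ p x ≤ 1 :=
        le_trans (setLIntegral_le_lintegral _ _) hadm
      calc ∫⁻ x in Q, ENNReal.ofReal |b z - b x| ≤ _ := step1
        _ = _ := step2
        _ ≤ ENNReal.ofReal (C₀ * l₁) * ENNReal.ofReal (l ^ n) +
            ENNReal.ofReal (C₀ * l₁ * (A*l) ^ n) * 1 := by
            rw [hvolQ]; exact add_le_add_right (mul_le_mul_right step3 _) _
        _ = ENNReal.ofReal (C₀ * l₁ * l ^ n + C₀ * l₁ * (A*l) ^ n) := by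
            rw [mul_one, ← ENNReal.ofReal_mul (by positivity),
              ENNReal.ofReal_add (by positivity) (by positivity)]
    -- from average to integral
    have havg : b z - cavg c l b = (volume Q).toReal⁻¹ * ∫ x in Q, (b z - b x) := by
      have hint : ∫ x in Q, (b z - b x) = (volume Q).toReal * b z - ∫ x in Q, b x := by
        rw [integral_sub hIntc hIntb, setIntegral_const, smul_eq_mul, measureReal_def]
      rw [cavg, ← hQ, setAverage_eq, hint, smul_eq_mul, measureReal_def]
      field_simp [hvolQ_toReal, hln.ne']
    have habs : |b z - cavg c l b| ≤ (volume Q).toReal⁻¹ * ∫ x in Q, |b z - b x| := by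
      rw [havg, abs_mul, abs_of_nonneg (inv_nonneg.mpr ENNReal.toReal_nonneg)]
      apply mul_le_mul_of_nonneg_left _ (inv_nonneg.mpr ENNReal.toReal_nonneg)
      calc |∫ x in Q, (b z - b x)| = ‖∫ x in Q, (b z - b x)‖ := (Real.norm_eq_abs _).symm
        _ ≤ ∫ x in Q, ‖b z - b x‖ := norm_integral_le_integral_norm _
        _ = ∫ x in Q, |b z - b x| := by simp [Real.norm_eq_abs]
    have hint_abs : Integrable (fun x => |b z - b x|) (volume.restrict Q) := by
      simpa using (hIntc.sub hIntb).abs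
    have hreal : ∫ x in Q, |b z - b x| = (∫⁻ x in Q, ENNReal.ofReal |b z - b x|).toReal := by
      rw [← MeasureTheory.ofReal_integral_eq_lintegral_ofReal hint_abs
        (Filter.Eventually.of_forall fun x => abs_nonneg _),
        toReal_ofReal (integral_nonneg fun x => abs_nonneg _)]
    have hfin : ∫ x in Q, |b z - b x| ≤ C₀ * l₁ * l ^ n + C₀ * l₁ * (A*l) ^ n := by
      rw [hreal]
      calc (∫⁻ x in Q, ENNReal.ofReal |b z - b x|).toReal
          ≤ (ENNReal.ofReal (C₀ * l₁ * l ^ n + C₀ * l₁ * (A*l) ^ n)).toReal :=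
            ENNReal.toReal_mono ofReal_ne_top hlint
        _ = C₀ * l₁ * l ^ n + C₀ * l₁ * (A*l) ^ n := toReal_ofReal (by positivity)
    calc |b z - cavg c l b| ≤ (volume Q).toReal⁻¹ * ∫ x in Q, |b z - b x| := habs
      _ ≤ (volume Q).toReal⁻¹ * (C₀ * l₁ * l ^ n + C₀ * l₁ * (A*l) ^ n) := by
          apply mul_le_mul_of_nonneg_left hfin (inv_nonneg.mpr ENNReal.toReal_nonneg)
      _ = K * l₁ := by
          rw [hvolQ_toReal, hK, mul_pow]
          field_simp
  -- nonemptiness of the admissible set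
  have hd2pos : 0 < d2 := lt_of_lt_of_le hd1 (le_trans (hdbd 0).1 (hdbd 0).2)
  set m : ℝ := max 1 l with hm
  have hm1 : (1:ℝ) ≤ m := le_max_left _ _
  have hmpos : (0:ℝ) < m := lt_of_lt_of_le one_pos hm1
  set l₀ : ℝ := m ^ d2 with hl₀def
  have hl₀pos : 0 < l₀ := Real.rpow_pos_of_pos hmpos _
  have hadm0 : ∫⁻ x, (ENNReal.ofReal |chi Q x| / ENNReal.ofReal l₀) ^ p x ≤ 1 := by
    set F := fun x : Rn n => (ENNReal.ofReal |chi Q x| / ENNReal.ofReal l₀) ^ p x with hF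
    have hFoff : ∀ x ∉ Q, F x = 0 := by
      intro x hx
      have : chi Q x = 0 := by rw [chi, indicator_of_notMem hx]
      rw [hF]
      simp only [this, abs_zero, ofReal_zero, ENNReal.zero_div]
      exact ENNReal.zero_rpow_of_pos (lt_of_lt_of_le one_pos (hpge1 x))
    have hsplit : ∫⁻ x, F x = ∫⁻ x in Q, F x := by
      rw [← lintegral_add_compl F hQm]
      have : ∫⁻ x in Qᶜ, F x = 0 := by
        have h0 : ∀ᵐ x ∂volume.restrict Qᶜ, F x = (0:ℝ≥0∞) :=
          (ae_restrict_iff' hQm.compl).mpr (Filter.Eventually.of_forall fun x hx => hFoff x hx)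
        have h1 : ∫⁻ x in Qᶜ, F x = ∫⁻ _x in Qᶜ, (0:ℝ≥0∞) := lintegral_congr_ae h0
        rw [h1]
        simp
      rw [this, add_zero]
    have hbound : ∀ x ∈ Q, F x ≤ ENNReal.ofReal ((1/l₀) ^ ((n:ℝ)/d2)) := by
      intro x hx
      have hx1 : chi Q x = 1 := by rw [chi, indicator_of_mem hx]
      have h1l : (0:ℝ) < 1 / l₀ := by positivity
      have h1l1 : 1 / l₀ ≤ 1 := by
        rw [div_le_one hl₀pos]
        exact Real.one_le_rpow hm1 hd2pos.le
      have hexp : (n:ℝ)/d2 ≤ p x := by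
        rw [hp]
        exact div_le_div_of_nonneg_left hnpos.le (hδpos x) (hdbd x).2
      rw [hF]
      simp only [hx1, abs_one, ← ENNReal.ofReal_div_of_pos hl₀pos,
        ENNReal.ofReal_rpow_of_pos h1l]
      exact ofReal_le_ofReal (Real.rpow_le_rpow_of_exponent_ge h1l h1l1 hexp)
    have hval : (1/l₀) ^ ((n:ℝ)/d2) * l ^ n ≤ 1 := by
      have hstep : (1/l₀ : ℝ) ^ ((n:ℝ)/d2) = (m ^ (n:ℝ))⁻¹ := by
        rw [hl₀def, one_div, ← Real.rpow_neg hmpos.le, ← Real.rpow_mul hmpos.le]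
        rw [← Real.rpow_neg hmpos.le]
        congr 1
        field_simp
      rw [hstep]
      have hle : l ^ n ≤ m ^ (n:ℝ) := by
        rw [Real.rpow_natCast]
        exact pow_le_pow_left₀ hl.le (le_max_right 1 l) n
      have hmn : (0:ℝ) < m ^ (n:ℝ) := Real.rpow_pos_of_pos hmpos _
      rw [inv_mul_le_iff₀ hmn, mul_one]
      exact hle
    calc ∫⁻ x, F x = ∫⁻ x in Q, F x := hsplit
      _ ≤ ∫⁻ _x in Q, ENNReal.ofReal ((1/l₀) ^ ((n:ℝ)/d2)) := by
          apply lintegral_mono_ae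
          rw [ae_restrict_iff' hQm]
          exact Filter.Eventually.of_forall fun x hx => hbound x hx
      _ = ENNReal.ofReal ((1/l₀) ^ ((n:ℝ)/d2)) * volume Q := setLIntegral_const _ _
      _ ≤ 1 := by
          rw [hvolQ, ← ENNReal.ofReal_mul (by positivity), ← ENNReal.ofReal_one]
          exact ofReal_le_ofReal hval
  -- conclude via sInf
  set S : Set ℝ≥0∞ := {lam : ℝ≥0∞ | ∃ l₁ : ℝ, 0 < l₁ ∧ lam = ENNReal.ofReal l₁ ∧
      ∫⁻ x, (ENNReal.ofReal |chi Q x| / ENNReal.ofReal l₁) ^ p x ≤ 1} with hS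
  have hmemS : ENNReal.ofReal l₀ ∈ S := ⟨l₀, hl₀pos, rfl, hadm0⟩
  have hne_top : sInf S ≠ ⊤ := ne_top_of_le_ne_top ofReal_ne_top (sInf_le hmemS)
  have hlow : ENNReal.ofReal (|b z - cavg c l b| / K) ≤ sInf S := by
    apply le_sInf
    rintro lam ⟨l₁, hl₁, rfl, hadm⟩
    apply ofReal_le_ofReal
    rw [div_le_iff₀ hKpos]
    calc |b z - cavg c l b| ≤ K * l₁ := hmain l₁ hl₁ hadm
      _ = l₁ * K := mul_comm _ _
  have hfinal : |b z - cavg c l b| / K ≤ (sInf S).toReal := by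
    have := ENNReal.toReal_mono hne_top hlow
    rwa [toReal_ofReal (by positivity)] at this
  rw [hvnorm]
  rw [div_le_iff₀ hKpos] at hfinal
  calc |b z - cavg c l b| ≤ (sInf S).toReal * K := hfinal
    _ = K * (sInf S).toReal := mul_comm _ _
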